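/- Let k ≥ 2 and let G be the graph obtained from the complete bipartite graph K_{k,k} by adding a new vertex adjacent to all 2k vertices. Then χ'_k(G) = k + 2. -/

import Mathlib

/-- The graph obtained from `K_{k,k}` (parts the two copies of `Fin k`) by adding a
universal vertex `none`. -/
def kkPlusUniversal (k : ℕ) : SimpleGraph (Option (Fin k ⊕ Fin k)) :=
  SimpleGraph.fromRel (fun a b =>
    a = none ∨ (∃ i j : Fin k, a = some (Sum.inl i) ∧ b = some (Sum.inr j)))

instance (k : ℕ) : DecidableRel (kkPlusUniversal k).Adj :=
  fun a b => decidable_of_iff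
    (a ≠ b ∧ ((a = none ∨ (∃ i j : Fin k, a = some (Sum.inl i) ∧ b = some (Sum.inr j))) ∨
      (b = none ∨ (∃ i j : Fin k, b = some (Sum.inl i) ∧ a = some (Sum.inr j))))) Iff.rfl

/-- The number of edges of `G` incident to `v` that receive color `i` under `c`. -/
def colorDeg {V : Type*} [Fintype V] [DecidableEq V] (G : SimpleGraph V)
    [DecidableRel G.Adj] {m : ℕ} (c : Sym2 V → Fin m) (i : Fin m) (v : V) : ℕ :=
  ((G.incidenceFinset v).filter (fun e => c e = i)).card

/-- `c` is a χ'_k-coloring: each color class spans a subgraph with all degrees ≡ 1 (mod k). -/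
def IsChiPrimeKColoring {V : Type*} [Fintype V] [DecidableEq V] (G : SimpleGraph V)
    [DecidableRel G.Adj] (k : ℕ) {m : ℕ} (c : Sym2 V → Fin m) : Prop :=
  ∀ i : Fin m, ∀ v : V, colorDeg G c i v = 0 ∨ colorDeg G c i v % k = 1

open Finset

/-! ### General lemmas about `colorDeg` -/

section General
variable {V : Type*} [Fintype V] [DecidableEq V] (G : SimpleGraph V)
    [DecidableRel G.Adj] {m : ℕ} (c : Sym2 V → Fin m)

lemma colorDeg_eq_card (t : Fin m) (v : V) :
    colorDeg G c t v = (univ.filter (fun w => G.Adj v w ∧ c s(v, w) = t)).card := by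
  classical
  rw [colorDeg]
  refine (Finset.card_bij (fun w _ => s(v, w)) ?_ ?_ ?_).symm
  · intro w hw
    simp only [mem_filter, mem_univ, true_and] at hw
    simp only [mem_filter, SimpleGraph.mem_incidenceFinset]
    exact ⟨⟨(SimpleGraph.mem_edgeSet G).mpr hw.1, Sym2.mem_mk_left v w⟩, hw.2⟩
  · intro a ha b hb h
    exact Sym2.congr_right.mp h
  · intro e he
    simp only [mem_filter, SimpleGraph.mem_incidenceFinset, SimpleGraph.incidenceSet] at he
    obtain ⟨⟨he1, he2⟩, he3⟩ := he
    induction e with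
    | _ a b =>
      rcases Sym2.mem_iff.mp he2 with rfl | rfl
      · exact ⟨b, by simp only [mem_filter, mem_univ, true_and]; exact ⟨he1, he3⟩, rfl⟩
      · refine ⟨a, ?_, Sym2.eq_swap⟩
        simp only [mem_filter, mem_univ, true_and]
        rw [Sym2.eq_swap] at he1 he3
        exact ⟨he1, he3⟩

lemma sum_colorDeg (v : V) : ∑ t : Fin m, colorDeg G c t v = G.degree v := by
  classical
  rw [← SimpleGraph.card_incidenceFinset_eq_degree]
  exact (Finset.card_eq_sum_card_fiberwise (f := c) (t := univ) (fun x _ => mem_univ _)).symm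

/-- The subgraph spanned by color class `t`. -/
def colorGraph (t : Fin m) : SimpleGraph V where
  Adj a b := G.Adj a b ∧ c s(a, b) = t
  symm := by constructor; intro a b ⟨h1, h2⟩; exact ⟨h1.symm, by rwa [Sym2.eq_swap]⟩
  loopless := by constructor; intro a ⟨h1, _⟩; exact G.loopless.irrefl a h1

instance (t : Fin m) : DecidableRel (colorGraph G c t).Adj := fun a b =>
  inferInstanceAs (Decidable (_ ∧ _))

lemma colorDeg_even (t : Fin m) : Even (∑ v : V, colorDeg G c t v) := by
  classical
  have h : ∀ v, colorDeg G c t v = (colorGraph G c t).degree v := by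
    intro v
    rw [colorDeg_eq_card, SimpleGraph.degree, SimpleGraph.neighborFinset_eq_filter]
    rfl
  simp only [h]
  rw [SimpleGraph.sum_degrees_eq_twice_card_edges]
  exact even_two_mul _

end General

/-! ### Near-orthomorphism data for the upper-bound construction -/

structure GoodMap (k : ℕ) where
  j0 : ZMod k
  g : ZMod k → ZMod k
  finv : ZMod k → ZMod k
  b1 : ∀ d, finv d ≠ j0
  b2 : ∀ d, d ≠ 0 → finv d - g (finv d) = d
  gInj : ∀ j1 j2, j1 ≠ j0 → j2 ≠ j0 → g j1 = g j2 → j1 = j2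

section GoodMapExists

variable {k : ℕ}

lemma castInj (hk : 2 ≤ k) {a b : ℕ} (ha : a < k) (hb : b < k)
    (h : (a : ZMod k) = b) : a = b := by
  rw [← ZMod.val_cast_of_lt ha, ← ZMod.val_cast_of_lt hb, h]

def goodMapOdd (k : ℕ) (hk : 2 ≤ k) (hodd : k % 2 = 1) : GoodMap k := by
  haveI : NeZero k := ⟨by omega⟩
  haveI : Fact (1 < k) := ⟨by omega⟩
  refine ⟨0, fun x => 2 * x, fun d => if d = 0 then 1 else -d, ?_, ?_, ?_⟩
  · intro d
    split_ifs with hd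
    · exact one_ne_zero
    · intro h
      exact hd (by simpa using h)
  · intro d hd
    rw [if_neg hd]
    ring
  · intro x y _ _ h
    have hu : IsUnit (2 : ZMod k) := by
      rw [← Nat.cast_ofNat, ZMod.isUnit_iff_coprime]
      simp [Nat.odd_iff, hodd]
    exact hu.mul_left_cancel h

/-- Nat-level `g` for even `k`. -/
def Ge (k a : ℕ) : ℕ := if a = 0 then 1 else if a < k / 2 then k - a else k - a + 1

/-- Nat-level `finv` for even `k`. -/
def Fe (k t : ℕ) : ℕ := if t = k - 1 then 0 else if t % 2 = 0 then t / 2 else (t + k + 1) / 2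

lemma Ge_lt (hk : 2 ≤ k) {a : ℕ} (ha : a < k) (ha2 : a ≠ k / 2) : Ge k a < k := by
  unfold Ge; split_ifs <;> omega

lemma Fe_lt (hk : 2 ≤ k) (he : k % 2 = 0) {t : ℕ} (ht : t < k) : Fe k t < k := by
  unfold Fe; split_ifs <;> omega

lemma Fe_ne (hk : 2 ≤ k) (he : k % 2 = 0) {t : ℕ} (ht : t < k) : Fe k t ≠ k / 2 := by
  unfold Fe; split_ifs <;> omega

def goodMapEven (k : ℕ) (hk : 2 ≤ k) (he : k % 2 = 0) : GoodMap k := by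
  haveI : NeZero k := ⟨by omega⟩
  refine ⟨((k / 2 : ℕ) : ZMod k), fun x => ((Ge k x.val : ℕ) : ZMod k),
    fun d => ((Fe k d.val : ℕ) : ZMod k), ?_, ?_, ?_⟩
  · intro d h
    have hd := ZMod.val_lt d
    exact Fe_ne hk he hd (castInj hk (Fe_lt hk he hd) (by omega) h)
  · intro d hd
    have hdv : d.val ≠ 0 := fun h => hd ((ZMod.val_eq_zero d).mp h)
    have hdlt := ZMod.val_lt d
    set t := d.val with hT
    have hFlt : Fe k t < k := Fe_lt hk he hdlt
    rw [ZMod.val_cast_of_lt hFlt]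
    have hd' : ((t : ℕ) : ZMod k) = d := ZMod.natCast_rightInverse d
    rw [← hd']
    have hk0 : ((k : ℕ) : ZMod k) = 0 := ZMod.natCast_self k
    by_cases h1 : t = k - 1
    · have hFe : Fe k t = 0 := by unfold Fe; rw [if_pos h1]
      have hGe : Ge k 0 = 1 := by unfold Ge; simp
      rw [hFe, hGe, h1]
      have : ((k - 1 : ℕ) : ZMod k) = (k : ℕ) - 1 := by
        push_cast [Nat.cast_sub (by omega : 1 ≤ k)]; ring
      rw [this, hk0]
      push_cast
      ring
    · by_cases h2 : t % 2 = 0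
      · set a := t / 2 with hA
        have hFe : Fe k t = a := by unfold Fe; rw [if_neg h1, if_pos h2]
        have ha1 : a ≠ 0 := by omega
        have ha2 : a < k / 2 := by omega
        have hGe : Ge k a = k - a := by unfold Ge; rw [if_neg ha1, if_pos ha2]
        rw [hFe, hGe]
        have hsub : ((k - a : ℕ) : ZMod k) = (k : ℕ) - (a : ℕ) :=
          Nat.cast_sub (by omega)
        rw [hsub, hk0]
        have h2a : ((2 * a : ℕ) : ZMod k) = ((t : ℕ) : ZMod k) := by
          congr 1; omega
        push_cast at h2a ⊢
        linear_combination h2a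
      · set a := (t + k + 1) / 2 with hA
        have hFe : Fe k t = a := by unfold Fe; rw [if_neg h1, if_neg h2]
        have ha1 : a ≠ 0 := by omega
        have ha2 : ¬ (a < k / 2) := by omega
        have hGe : Ge k a = k - a + 1 := by unfold Ge; rw [if_neg ha1, if_neg ha2]
        rw [hFe, hGe]
        have hsub : ((k - a + 1 : ℕ) : ZMod k) = (k : ℕ) - (a : ℕ) + 1 := by
          push_cast [Nat.cast_sub (by omega : a ≤ k)]; ring
        rw [hsub, hk0]
        have h2a : ((2 * a : ℕ) : ZMod k) = ((t + k + 1 : ℕ) : ZMod k) := by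
          congr 1; omega
        push_cast at h2a ⊢
        rw [hk0] at h2a
        linear_combination h2a
  · intro x y hx hy h
    have hxv := ZMod.val_lt x
    have hyv := ZMod.val_lt y
    have hx' : x.val ≠ k / 2 := by
      intro hc
      exact hx (by rw [← ZMod.natCast_rightInverse x, hc])
    have hy' : y.val ≠ k / 2 := by
      intro hc
      exact hy (by rw [← ZMod.natCast_rightInverse y, hc])
    have hGx := Ge_lt hk hxv hx'
    have hGy := Ge_lt hk hyv hy'
    have hG : Ge k x.val = Ge k y.val := castInj hk hGx hGy h
    have : x.val = y.val := by
      unfold Ge at hG; split_ifs at hG <;> omega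
    exact ZMod.val_injective k this

def goodMap (k : ℕ) (hk : 2 ≤ k) : GoodMap k :=
  if h : k % 2 = 0 then goodMapEven k hk h else goodMapOdd k hk (by omega)

end GoodMapExists

/-! ### Structure of the graph -/

namespace KKU

variable {k : ℕ}

abbrev Vt (k : ℕ) := Option (Fin k ⊕ Fin k)

def vL (i : Fin k) : Vt k := some (Sum.inl i)
def vR (j : Fin k) : Vt k := some (Sum.inr j)

lemma vL_inj : Function.Injective (vL (k := k)) := by
  intro a b h; simpa [vL] using h

lemma vR_inj : Function.Injective (vR (k := k)) := by
  intro a b h; simpa [vR] using h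

lemma adj_none_iff {w : Vt k} : (kkPlusUniversal k).Adj none w ↔ w ≠ none := by
  constructor
  · intro h; exact fun hw => (kkPlusUniversal k).loopless.irrefl none (hw ▸ h)
  · intro h
    exact ⟨fun he => h he.symm, Or.inl (Or.inl rfl)⟩

lemma adj_LR (i j : Fin k) : (kkPlusUniversal k).Adj (vL i) (vR j) := by
  refine ⟨by simp [vL, vR], Or.inl (Or.inr ⟨i, j, rfl, rfl⟩)⟩

lemma not_adj_LL (i j : Fin k) : ¬ (kkPlusUniversal k).Adj (vL i) (vL j) := by
  rintro ⟨hne, h | h⟩ <;> rcases h with h | ⟨a, b, h1, h2⟩ <;> simp_all [vL]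

lemma not_adj_RR (i j : Fin k) : ¬ (kkPlusUniversal k).Adj (vR i) (vR j) := by
  rintro ⟨hne, h | h⟩ <;> rcases h with h | ⟨a, b, h1, h2⟩ <;> simp_all [vR]

lemma adj_L_iff {i : Fin k} {w : Vt k} :
    (kkPlusUniversal k).Adj (vL i) w ↔ w = none ∨ ∃ j, w = vR j := by
  constructor
  · intro h
    match w with
    | none => exact Or.inl rfl
    | some (Sum.inl j) => exact absurd h (not_adj_LL i j)
    | some (Sum.inr j) => exact Or.inr ⟨j, rfl⟩
  · rintro (rfl | ⟨j, rfl⟩)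
    · exact ((kkPlusUniversal k).adj_symm (adj_none_iff.mpr (by simp [vL])))
    · exact adj_LR i j

lemma adj_R_iff {j : Fin k} {w : Vt k} :
    (kkPlusUniversal k).Adj (vR j) w ↔ w = none ∨ ∃ i, w = vL i := by
  constructor
  · intro h
    match w with
    | none => exact Or.inl rfl
    | some (Sum.inl i) => exact Or.inr ⟨i, rfl⟩
    | some (Sum.inr i) => exact absurd h (not_adj_RR j i)
  · rintro (rfl | ⟨i, rfl⟩)
    · exact ((kkPlusUniversal k).adj_symm (adj_none_iff.mpr (by simp [vR])))
    · exact ((kkPlusUniversal k).adj_symm (adj_LR i j))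

lemma degree_none : (kkPlusUniversal k).degree none = 2 * k := by
  rw [SimpleGraph.degree, SimpleGraph.neighborFinset_eq_filter]
  have : (univ.filter (fun w => (kkPlusUniversal k).Adj none w)) = univ.erase none := by
    ext w; simp [adj_none_iff, Finset.mem_erase]
  rw [this, Finset.card_erase_of_mem (mem_univ _)]
  simp [Fintype.card_option, Fintype.card_sum]
  omega

lemma degree_L (i : Fin k) : (kkPlusUniversal k).degree (vL i) = k + 1 := by
  rw [SimpleGraph.degree, SimpleGraph.neighborFinset_eq_filter]
  have : (univ.filter (fun w => (kkPlusUniversal k).Adj (vL i) w))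
      = insert none ((univ : Finset (Fin k)).image vR) := by
    ext w
    simp only [mem_filter, mem_univ, true_and, Finset.mem_insert, Finset.mem_image, adj_L_iff]
    tauto
  rw [this, Finset.card_insert_of_notMem (by simp [vR]),
    Finset.card_image_of_injective _ vR_inj]
  simp [Nat.add_comm]

lemma degree_R (j : Fin k) : (kkPlusUniversal k).degree (vR j) = k + 1 := by
  rw [SimpleGraph.degree, SimpleGraph.neighborFinset_eq_filter]
  have : (univ.filter (fun w => (kkPlusUniversal k).Adj (vR j) w))
      = insert none ((univ : Finset (Fin k)).image vL) := by
    ext w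
    simp only [mem_filter, mem_univ, true_and, Finset.mem_insert, Finset.mem_image, adj_R_iff]
    tauto
  rw [this, Finset.card_insert_of_notMem (by simp [vL]),
    Finset.card_image_of_injective _ vL_inj]
  simp [Nat.add_comm]

/-! ### The coloring -/

section Color
variable [NeZero k]

def ι (i : Fin k) : ZMod k := (i.val : ZMod k)

lemma ι_inj : Function.Injective (ι (k := k)) := by
  intro a b h
  have ha := ZMod.val_cast_of_lt a.isLt
  have hb := ZMod.val_cast_of_lt b.isLt
  rw [ι, ι] at h
  exact Fin.ext (by rw [← ha, ← hb, h])

lemma val_j0_lt (M : GoodMap k) : M.j0.val < k + 2 :=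
  lt_of_lt_of_le (ZMod.val_lt _) (by omega)

/-- Color of the `K_{k,k}`-edge between `L i` and `R j`. -/
def χK (M : GoodMap k) (i j : Fin k) : Fin (k + 2) :=
  if ι i = ι j then ⟨k, by omega⟩
  else if ι i = M.g (ι j) ∧ ι j ≠ M.j0 then ⟨k + 1, by omega⟩
  else ⟨(M.finv (ι j - ι i)).val, lt_of_lt_of_le (ZMod.val_lt _) (by omega)⟩

def colorFun (M : GoodMap k) : Vt k → Vt k → Fin (k + 2)
  | none, some (Sum.inl _) => ⟨M.j0.val, val_j0_lt M⟩
  | some (Sum.inl _), none => ⟨M.j0.val, val_j0_lt M⟩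
  | none, some (Sum.inr j) => ⟨j.val, by omega⟩
  | some (Sum.inr j), none => ⟨j.val, by omega⟩
  | some (Sum.inl i), some (Sum.inr j) => χK M i j
  | some (Sum.inr j), some (Sum.inl i) => χK M i j
  | _, _ => ⟨0, by omega⟩

lemma colorFun_symm (M : GoodMap k) (v w : Vt k) :
    colorFun M v w = colorFun M w v := by
  match v, w with
  | none, none => rfl
  | none, some (Sum.inl _) => rfl
  | none, some (Sum.inr _) => rfl
  | some (Sum.inl _), none => rfl
  | some (Sum.inr _), none => rfl
  | some (Sum.inl _), some (Sum.inl _) => rfl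
  | some (Sum.inl _), some (Sum.inr _) => rfl
  | some (Sum.inr _), some (Sum.inl _) => rfl
  | some (Sum.inr _), some (Sum.inr _) => rfl

def theColoring (M : GoodMap k) : Sym2 (Vt k) → Fin (k + 2) :=
  Sym2.lift ⟨colorFun M, colorFun_symm M⟩

lemma theColoring_mk (M : GoodMap k) (v w : Vt k) :
    theColoring M s(v, w) = colorFun M v w := rfl

lemma j0_eq_iff (M : GoodMap k) {tv : ℕ} (htv : tv < k) :
    M.j0 = (tv : ZMod k) ↔ M.j0.val = tv := by
  constructor
  · intro h; rw [h, ZMod.val_cast_of_lt htv]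
  · intro h; rw [← ZMod.natCast_rightInverse M.j0, h]

lemma ι_eq_cast_iff {tv : ℕ} (htv : tv < k) (j : Fin k) :
    ι j = (tv : ZMod k) ↔ j.val = tv := by
  constructor
  · intro h; rw [← ZMod.val_cast_of_lt htv, ← h, ι, ZMod.val_cast_of_lt j.isLt]
  · intro h; rw [ι, h]

lemma χK_val_D1 (M : GoodMap k) {i j : Fin k} : (χK M i j).val = k ↔ ι i = ι j := by
  unfold χK
  split_ifs with h1 h2
  · simpa using h1
  · exact iff_of_false (by simp only [Fin.val_mk]; omega) h1
  · exact iff_of_false (by have := ZMod.val_lt (M.finv (ι j - ι i)); simp only [Fin.val_mk]; omega) h1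

lemma χK_val_D2 (M : GoodMap k) {i j : Fin k} :
    (χK M i j).val = k + 1 ↔ (ι i ≠ ι j ∧ ι i = M.g (ι j) ∧ ι j ≠ M.j0) := by
  unfold χK
  split_ifs with h1 h2
  · exact iff_of_false (by simp only [Fin.val_mk]; omega) (fun h => h.1 h1)
  · exact iff_of_true rfl ⟨h1, h2⟩
  · exact iff_of_false (by have := ZMod.val_lt (M.finv (ι j - ι i)); simp only [Fin.val_mk]; omega)
      (fun h => h2 h.2)

lemma χK_val_B (M : GoodMap k) {i j : Fin k} {tv : ℕ} (htv : tv < k) :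
    (χK M i j).val = tv ↔
      (ι i ≠ ι j ∧ ¬(ι i = M.g (ι j) ∧ ι j ≠ M.j0) ∧ M.finv (ι j - ι i) = (tv : ZMod k)) := by
  unfold χK
  split_ifs with h1 h2
  · exact iff_of_false (by simp only [Fin.val_mk]; omega) (fun h => h.1 h1)
  · exact iff_of_false (by simp only [Fin.val_mk]; omega) (fun h => h.2.1 h2)
  · constructor
    · intro h
      simp only [Fin.val_mk] at h
      refine ⟨h1, h2, ?_⟩
      rw [← ZMod.natCast_rightInverse (M.finv (ι j - ι i)), h]
    · intro ⟨_, _, h⟩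
      show (M.finv (ι j - ι i)).val = tv
      rw [h, ZMod.val_cast_of_lt htv]

theorem upper_bound (hk : 2 ≤ k) (M : GoodMap k) :
    IsChiPrimeKColoring (kkPlusUniversal k) k (theColoring M) := by
  have h1modk : 1 % k = 1 := Nat.mod_eq_of_lt (by omega)
  have hk1modk : (k + 1) % k = 1 := by
    conv_lhs => rw [show k + 1 = k * 1 + 1 by ring]
    rw [Nat.mul_add_mod, h1modk]
  intro t v
  rw [colorDeg_eq_card]
  have htcases : t.val < k ∨ t.val = k ∨ t.val = k + 1 := by have := t.isLt; omega
  match v with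
  | none =>
    rcases htcases with htv | htv
    · -- color < k
      by_cases hA : M.j0 = ((t.val : ℕ) : ZMod k)
      · -- the star class at `none`
        right
        have hset : (univ.filter (fun w => (kkPlusUniversal k).Adj none w ∧
            theColoring M s(none, w) = t)) = insert (vR ⟨t.val, htv⟩) (univ.image vL) := by
          ext w
          simp only [mem_filter, mem_univ, true_and, Finset.mem_insert, Finset.mem_image]
          match w with
          | none =>
            constructor
            · rintro ⟨h, -⟩; exact absurd rfl (adj_none_iff.mp h)
            · rintro (h | ⟨a, ha⟩) <;> simp_all [vR, vL]
          | some (Sum.inl i) =>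
            constructor
            · intro _; exact Or.inr ⟨i, rfl⟩
            · intro _
              refine ⟨adj_none_iff.mpr (by simp), ?_⟩
              show (⟨M.j0.val, val_j0_lt M⟩ : Fin (k+2)) = t
              exact Fin.ext ((j0_eq_iff M htv).mp hA)
          | some (Sum.inr j) =>
            constructor
            · rintro ⟨-, h⟩
              replace h : j.val = t.val := congrArg Fin.val h
              exact Or.inl (by simp [vR, Fin.ext_iff, h])
            · rintro (h | ⟨a, ha⟩)
              · rw [show j = (⟨t.val, htv⟩ : Fin k) by simpa [vR] using h]
                exact ⟨adj_none_iff.mpr (by simp), Fin.ext rfl⟩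
              · exact absurd ha (by simp [vL])
        rw [hset, Finset.card_insert_of_notMem (by simp [vL, vR]),
          Finset.card_image_of_injective _ vL_inj, card_univ, Fintype.card_fin]
        simpa using hk1modk
      · -- a single edge class at `none`
        right
        have hset : (univ.filter (fun w => (kkPlusUniversal k).Adj none w ∧
            theColoring M s(none, w) = t)) = {vR ⟨t.val, htv⟩} := by
          ext w
          simp only [mem_filter, mem_univ, true_and, Finset.mem_singleton]
          match w with
          | none =>
            constructor
            · rintro ⟨h, -⟩; exact absurd rfl (adj_none_iff.mp h)
            · intro h; simp [vR] at h
          | some (Sum.inl i) =>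
            constructor
            · rintro ⟨-, h⟩
              replace h : M.j0.val = t.val := congrArg Fin.val h
              exact absurd ((j0_eq_iff M htv).mpr h) hA
            · intro h; simp [vR] at h
          | some (Sum.inr j) =>
            constructor
            · rintro ⟨-, h⟩
              replace h : j.val = t.val := congrArg Fin.val h
              simp [vR, Fin.ext_iff, h]
            · intro h
              rw [show j = (⟨t.val, htv⟩ : Fin k) by simpa [vR] using h]
              exact ⟨adj_none_iff.mpr (by simp), Fin.ext rfl⟩
        rw [hset, Finset.card_singleton]
        exact h1modk
    · -- colors k and k+1 are absent at `none`
      left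
      rw [Finset.card_eq_zero, Finset.eq_empty_iff_forall_notMem]
      intro w hw
      simp only [mem_filter, mem_univ, true_and] at hw
      match w with
      | none => exact absurd rfl (adj_none_iff.mp hw.1)
      | some (Sum.inl i) =>
        have h : M.j0.val = t.val := congrArg Fin.val hw.2
        have := ZMod.val_lt M.j0
        omega
      | some (Sum.inr j) =>
        have h : j.val = t.val := congrArg Fin.val hw.2
        have := j.isLt
        omega
  | some (Sum.inl i) =>
    -- vertex L i
    rw [show (some (Sum.inl i) : Vt k) = vL i from rfl]
    rcases htcases with htv | htv
    · by_cases hA : M.j0 = ((t.val : ℕ) : ZMod k)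
      · right
        have hset : (univ.filter (fun w => (kkPlusUniversal k).Adj (vL i) w ∧
            theColoring M s(vL i, w) = t)) = {(none : Vt k)} := by
          ext w
          simp only [mem_filter, mem_univ, true_and, Finset.mem_singleton]
          match w with
          | none =>
            refine iff_of_true ⟨adj_L_iff.mpr (Or.inl rfl), ?_⟩ rfl
            show (⟨M.j0.val, val_j0_lt M⟩ : Fin (k+2)) = t
            exact Fin.ext ((j0_eq_iff M htv).mp hA)
          | some (Sum.inl i') =>
            refine iff_of_false (fun h => ?_) (by simp)
            exact not_adj_LL i i' h.1
          | some (Sum.inr j) =>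
            refine iff_of_false (fun h => ?_) (by simp)
            have hB := (χK_val_B M (i := i) (j := j) htv).mp
              (congrArg Fin.val h.2)
            exact M.b1 (ι j - ι i) (hB.2.2.trans hA.symm)
        rw [hset, Finset.card_singleton]
        exact h1modk
      · -- B-class at L i : at most one edge
        have hcard : (univ.filter (fun w => (kkPlusUniversal k).Adj (vL i) w ∧
            theColoring M s(vL i, w) = t)).card ≤ 1 := by
          rw [Finset.card_le_one]
          intro a ha b hb
          simp only [mem_filter, mem_univ, true_and] at ha hb
          have key : ∀ w, (kkPlusUniversal k).Adj (vL i) w →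
              theColoring M s(vL i, w) = t → ∃ j : Fin k, w = vR j ∧
                ι j = ι i + (((t.val : ℕ) : ZMod k) - M.g ((t.val : ℕ) : ZMod k)) := by
            intro w hadj hcol
            match w with
            | none =>
              exfalso
              have h : M.j0.val = t.val := congrArg Fin.val hcol
              exact hA ((j0_eq_iff M htv).mpr h)
            | some (Sum.inl i') => exact absurd hadj (not_adj_LL i i')
            | some (Sum.inr j) =>
              have hB := (χK_val_B M (i := i) (j := j) htv).mp
                (congrArg Fin.val hcol)
              refine ⟨j, rfl, ?_⟩
              have hd : ι j - ι i ≠ 0 := sub_ne_zero.mpr (fun h => hB.1 h.symm)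
              have := M.b2 _ hd
              rw [hB.2.2] at this
              rw [this]
              ring
          obtain ⟨ja, rfl, hja⟩ := key a ha.1 ha.2
          obtain ⟨jb, rfl, hjb⟩ := key b hb.1 hb.2
          rw [ι_inj (hja.trans hjb.symm)]
        rcases Nat.le_one_iff_eq_zero_or_eq_one.mp hcard with h0 | h0
        · exact Or.inl h0
        · right; rw [h0]; exact h1modk
    · -- colors k and k+1 at L i
      rcases htv with htv | htv
      · -- D1 : the single edge to R i
        right
        have hset : (univ.filter (fun w => (kkPlusUniversal k).Adj (vL i) w ∧
            theColoring M s(vL i, w) = t)) = {vR i} := by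
          ext w
          simp only [mem_filter, mem_univ, true_and, Finset.mem_singleton]
          match w with
          | none =>
            refine iff_of_false (fun h => ?_) (by simp [vR])
            have hval : M.j0.val = t.val := congrArg Fin.val h.2
            have := ZMod.val_lt M.j0
            omega
          | some (Sum.inl i') =>
            exact iff_of_false (fun h => not_adj_LL i i' h.1) (by simp [vR])
          | some (Sum.inr j) =>
            constructor
            · rintro ⟨-, h⟩
              have hval0 : (χK M i j).val = t.val := congrArg Fin.val h
              have hval : (χK M i j).val = k := by omega
              have := ι_inj ((χK_val_D1 M).mp hval)
              rw [← this]
              rfl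
            · intro h
              have hj : j = i := by simpa [vR] using h
              refine ⟨adj_LR i j, Fin.ext ?_⟩
              have : (χK M i j).val = k := (χK_val_D1 M).mpr (by rw [hj])
              show (χK M i j).val = t.val
              omega
        rw [hset, Finset.card_singleton]
        exact h1modk
      · -- D2 : at most one edge
        have hcard : (univ.filter (fun w => (kkPlusUniversal k).Adj (vL i) w ∧
            theColoring M s(vL i, w) = t)).card ≤ 1 := by
          rw [Finset.card_le_one]
          intro a ha b hb
          simp only [mem_filter, mem_univ, true_and] at ha hb
          have key : ∀ w, (kkPlusUniversal k).Adj (vL i) w →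
              theColoring M s(vL i, w) = t → ∃ j : Fin k, w = vR j ∧
                ι i = M.g (ι j) ∧ ι j ≠ M.j0 := by
            intro w hadj hcol
            match w with
            | none =>
              exfalso
              have hval : M.j0.val = t.val := congrArg Fin.val hcol
              have := ZMod.val_lt M.j0
              omega
            | some (Sum.inl i') => exact absurd hadj (not_adj_LL i i')
            | some (Sum.inr j) =>
              have hval0 : (χK M i j).val = t.val := congrArg Fin.val hcol
              have hval : (χK M i j).val = k + 1 := by omega
              obtain ⟨-, h2, h3⟩ := (χK_val_D2 M).mp hval
              exact ⟨j, rfl, h2, h3⟩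
          obtain ⟨ja, rfl, hja1, hja2⟩ := key a ha.1 ha.2
          obtain ⟨jb, rfl, hjb1, hjb2⟩ := key b hb.1 hb.2
          rw [ι_inj (M.gInj _ _ hja2 hjb2 (hja1.symm.trans hjb1))]
        rcases Nat.le_one_iff_eq_zero_or_eq_one.mp hcard with h0 | h0
        · exact Or.inl h0
        · right; rw [h0]; exact h1modk
  | some (Sum.inr j) =>
    -- vertex R j
    rw [show (some (Sum.inr j) : Vt k) = vR j from rfl]
    rcases htcases with htv | htv
    · -- B-classes and the star class at R j : at most one edge
      have hcard : (univ.filter (fun w => (kkPlusUniversal k).Adj (vR j) w ∧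
          theColoring M s(vR j, w) = t)).card ≤ 1 := by
        rw [Finset.card_le_one]
        intro a ha b hb
        simp only [mem_filter, mem_univ, true_and] at ha hb
        have key : ∀ w, (kkPlusUniversal k).Adj (vR j) w →
            theColoring M s(vR j, w) = t →
            (w = none ∧ ι j = ((t.val : ℕ) : ZMod k)) ∨
            (∃ i' : Fin k, w = vL i' ∧ ι i' ≠ ι j ∧
              ¬(ι i' = M.g (ι j) ∧ ι j ≠ M.j0) ∧
              M.finv (ι j - ι i') = ((t.val : ℕ) : ZMod k)) := by
          intro w hadj hcol
          match w with
          | none =>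
            left
            have hval : j.val = t.val := congrArg Fin.val hcol
            exact ⟨rfl, (ι_eq_cast_iff htv j).mpr hval⟩
          | some (Sum.inl i') =>
            right
            have hval : (χK M i' j).val = t.val := congrArg Fin.val hcol
            obtain ⟨h1, h2, h3⟩ := (χK_val_B M htv).mp hval
            exact ⟨i', rfl, h1, h2, h3⟩
          | some (Sum.inr j') => exact absurd hadj (not_adj_RR j j')
        have contra : ∀ i' : Fin k, ι j = ((t.val : ℕ) : ZMod k) →
            ι i' ≠ ι j → ¬(ι i' = M.g (ι j) ∧ ι j ≠ M.j0) →
            M.finv (ι j - ι i') = ((t.val : ℕ) : ZMod k) → False := by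
          intro i' hz h1 h2 h3
          have hd : ι j - ι i' ≠ 0 := sub_ne_zero.mpr (fun h => h1 h.symm)
          have hb2 := M.b2 _ hd
          rw [h3, ← hz] at hb2
          have hgi : ι i' = M.g (ι j) := by
            have := sub_right_injective hb2
            exact this.symm
          have hj0 : ι j ≠ M.j0 := by
            rw [hz]
            exact fun h => M.b1 _ (h3.trans h)
          exact h2 ⟨hgi, hj0⟩
        rcases key a ha.1 ha.2 with ⟨rfl, hza⟩ | ⟨ia, rfl, hia1, hia2, hia3⟩ <;>
          rcases key b hb.1 hb.2 with ⟨rfl, hzb⟩ | ⟨ib, rfl, hib1, hib2, hib3⟩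
        · rfl
        · exact absurd (contra ib hza hib1 hib2 hib3) (fun h => h)
        · exact absurd (contra ia hzb hia1 hia2 hia3) (fun h => h)
        · have hda : ι j - ι ia ≠ 0 := sub_ne_zero.mpr (fun h => hia1 h.symm)
          have hdb : ι j - ι ib ≠ 0 := sub_ne_zero.mpr (fun h => hib1 h.symm)
          have h2a := M.b2 _ hda
          have h2b := M.b2 _ hdb
          rw [hia3] at h2a
          rw [hib3] at h2b
          have : ι j - ι ia = ι j - ι ib := by rw [← h2a, ← h2b]
          have := sub_right_injective this
          rw [ι_inj this]
      rcases Nat.le_one_iff_eq_zero_or_eq_one.mp hcard with h0 | h0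
      · exact Or.inl h0
      · right; rw [h0]; exact h1modk
    · rcases htv with htv | htv
      · -- D1 : single edge to L j
        right
        have hset : (univ.filter (fun w => (kkPlusUniversal k).Adj (vR j) w ∧
            theColoring M s(vR j, w) = t)) = {vL j} := by
          ext w
          simp only [mem_filter, mem_univ, true_and, Finset.mem_singleton]
          match w with
          | none =>
            refine iff_of_false (fun h => ?_) (by simp [vL])
            have hval : j.val = t.val := congrArg Fin.val h.2
            have := j.isLt
            omega
          | some (Sum.inr j') =>
            exact iff_of_false (fun h => not_adj_RR j j' h.1) (by simp [vL])
          | some (Sum.inl i) =>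
            constructor
            · rintro ⟨-, h⟩
              have hval0 : (χK M i j).val = t.val := congrArg Fin.val h
              have hval : (χK M i j).val = k := by omega
              have := ι_inj ((χK_val_D1 M).mp hval)
              rw [this]
              rfl
            · intro h
              have hi : i = j := by simpa [vL] using h
              refine ⟨(kkPlusUniversal k).adj_symm (adj_LR i j), Fin.ext ?_⟩
              have : (χK M i j).val = k := (χK_val_D1 M).mpr (by rw [hi])
              show (χK M i j).val = t.val
              omega
        rw [hset, Finset.card_singleton]
        exact h1modk
      · -- D2 : at most one edge
        have hcard : (univ.filter (fun w => (kkPlusUniversal k).Adj (vR j) w ∧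
            theColoring M s(vR j, w) = t)).card ≤ 1 := by
          rw [Finset.card_le_one]
          intro a ha b hb
          simp only [mem_filter, mem_univ, true_and] at ha hb
          have key : ∀ w, (kkPlusUniversal k).Adj (vR j) w →
              theColoring M s(vR j, w) = t → ∃ i' : Fin k, w = vL i' ∧
                ι i' = M.g (ι j) := by
            intro w hadj hcol
            match w with
            | none =>
              exfalso
              have hval : j.val = t.val := congrArg Fin.val hcol
              have := j.isLt
              omega
            | some (Sum.inr j') => exact absurd hadj (not_adj_RR j j')
            | some (Sum.inl i') =>
              have hval0 : (χK M i' j).val = t.val := congrArg Fin.val hcol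
              have hval : (χK M i' j).val = k + 1 := by omega
              obtain ⟨-, h2, -⟩ := (χK_val_D2 M).mp hval
              exact ⟨i', rfl, h2⟩
          obtain ⟨ia, rfl, hia⟩ := key a ha.1 ha.2
          obtain ⟨ib, rfl, hib⟩ := key b hb.1 hb.2
          rw [ι_inj (hia.trans hib.symm)]
        rcases Nat.le_one_iff_eq_zero_or_eq_one.mp hcard with h0 | h0
        · exact Or.inl h0
        · right; rw [h0]; exact h1modk

end Color

/-! ### The lower bound -/

lemma mod_k_cases {k x : ℕ} (hk : 2 ≤ k) (h : x % k = 1) (hle : x ≤ 2 * k) :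
    x = 1 ∨ x = k + 1 := by
  rcases Nat.lt_or_ge x k with h1 | h1
  · rw [Nat.mod_eq_of_lt h1] at h
    omega
  rcases Nat.lt_or_ge x (2 * k) with h2 | h2
  · rw [Nat.mod_eq_sub_mod h1, Nat.mod_eq_of_lt (by omega)] at h
    omega
  · exfalso
    have hx : x = 2 * k := by omega
    rw [hx, Nat.mul_mod_left] at h
    omega

lemma kp1_mul {k a : ℕ} (hk : 2 ≤ k) (h : a * (k + 1) = 2 * k) : False := by
  rcases Nat.lt_or_ge a 2 with h2 | h2
  · interval_cases a <;> omega
  · have := Nat.mul_le_mul_right (k + 1) h2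
    omega

section Lower

variable {k m : ℕ} {c : Sym2 (Vt k) → Fin m}

lemma colorDeg_le_degree (t : Fin m) (v : Vt k) :
    colorDeg (kkPlusUniversal k) c t v ≤ (kkPlusUniversal k).degree v := by
  rw [colorDeg, ← SimpleGraph.card_incidenceFinset_eq_degree]
  exact Finset.card_filter_le _ _

lemma degree_some {v : Vt k} (hv : v ≠ none) :
    (kkPlusUniversal k).degree v = k + 1 := by
  match v with
  | none => exact absurd rfl hv
  | some (Sum.inl i) => exact degree_L i
  | some (Sum.inr j) => exact degree_R j

lemma vals_some (hk : 2 ≤ k) (hc : IsChiPrimeKColoring (kkPlusUniversal k) k c)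
    {v : Vt k} (hv : v ≠ none) (t : Fin m) :
    colorDeg (kkPlusUniversal k) c t v = 0 ∨ colorDeg (kkPlusUniversal k) c t v = 1 ∨
      colorDeg (kkPlusUniversal k) c t v = k + 1 := by
  rcases hc t v with h | h
  · exact Or.inl h
  · have hle := colorDeg_le_degree (c := c) t v
    rw [degree_some hv] at hle
    rcases mod_k_cases hk h (by omega) with h' | h'
    · exact Or.inr (Or.inl h')
    · exact Or.inr (Or.inr h')

lemma vals_none (hk : 2 ≤ k) (hc : IsChiPrimeKColoring (kkPlusUniversal k) k c) (t : Fin m) :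
    colorDeg (kkPlusUniversal k) c t none = 0 ∨ colorDeg (kkPlusUniversal k) c t none = 1 ∨
      colorDeg (kkPlusUniversal k) c t none = k + 1 := by
  rcases hc t none with h | h
  · exact Or.inl h
  · have hle := colorDeg_le_degree (c := c) t none
    rw [degree_none] at hle
    rcases mod_k_cases hk h hle with h' | h'
    · exact Or.inr (Or.inl h')
    · exact Or.inr (Or.inr h')

/-- Which side of the bipartition a (non-`none`) vertex is on. -/
def sideOf : Vt k → Bool
  | none => true
  | some (Sum.inl _) => false
  | some (Sum.inr _) => true

lemma adj_some_iff {v w : Vt k} (hv : v ≠ none) (hw : w ≠ none) :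
    (kkPlusUniversal k).Adj v w ↔ sideOf v ≠ sideOf w := by
  match v, w with
  | none, _ => exact absurd rfl hv
  | some _, none => exact absurd rfl hw
  | some (Sum.inl i), some (Sum.inl j) =>
    exact iff_of_false (not_adj_LL i j) (by simp [sideOf])
  | some (Sum.inl i), some (Sum.inr j) =>
    exact iff_of_true (adj_LR i j) (by simp [sideOf])
  | some (Sum.inr i), some (Sum.inl j) =>
    exact iff_of_true ((kkPlusUniversal k).adj_symm (adj_LR j i)) (by simp [sideOf])
  | some (Sum.inr i), some (Sum.inr j) =>
    exact iff_of_false (not_adj_RR i j) (by simp [sideOf])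

lemma side_filter_card (b : Bool) :
    (Finset.univ.filter (fun z : Vt k => z ≠ none ∧ sideOf z = b)).card = k := by
  cases b
  · have : (Finset.univ.filter (fun z : Vt k => z ≠ none ∧ sideOf z = false))
        = (Finset.univ : Finset (Fin k)).image vL := by
      ext z
      simp only [mem_filter, mem_univ, true_and, Finset.mem_image]
      match z with
      | none => simp [sideOf, vL]
      | some (Sum.inl i) => simp [sideOf, vL]
      | some (Sum.inr j) => simp [sideOf, vR, vL]
    rw [this, Finset.card_image_of_injective _ vL_inj, card_univ, Fintype.card_fin]
  · have : (Finset.univ.filter (fun z : Vt k => z ≠ none ∧ sideOf z = true))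
        = (Finset.univ : Finset (Fin k)).image vR := by
      ext z
      simp only [mem_filter, mem_univ, true_and, Finset.mem_image]
      match z with
      | none => simp [sideOf, vR]
      | some (Sum.inl i) => simp [sideOf, vL, vR]
      | some (Sum.inr j) => simp [sideOf, vR]
    rw [this, Finset.card_image_of_injective _ vR_inj, card_univ, Fintype.card_fin]

lemma one_edge (τ : Fin m) {v a : Vt k} (ha : (kkPlusUniversal k).Adj v a)
    (hca : c s(v, a) = τ) : 1 ≤ colorDeg (kkPlusUniversal k) c τ v := by
  rw [colorDeg_eq_card]
  exact Finset.card_pos.mpr ⟨a, by simp [ha, hca]⟩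

lemma two_edges (τ : Fin m) {v a b : Vt k} (hab : a ≠ b)
    (ha : (kkPlusUniversal k).Adj v a) (hb : (kkPlusUniversal k).Adj v b)
    (hca : c s(v, a) = τ) (hcb : c s(v, b) = τ) :
    2 ≤ colorDeg (kkPlusUniversal k) c τ v := by
  rw [colorDeg_eq_card]
  calc 2 = ({a, b} : Finset (Vt k)).card := (Finset.card_pair hab).symm
  _ ≤ _ := Finset.card_le_card (by
      intro x hx
      simp only [Finset.mem_insert, Finset.mem_singleton] at hx
      rcases hx with rfl | rfl <;> simp [ha, hb, hca, hcb])

lemma get_edge (τ : Fin m) {v : Vt k} (h : 1 ≤ colorDeg (kkPlusUniversal k) c τ v) :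
    ∃ a, (kkPlusUniversal k).Adj v a ∧ c s(v, a) = τ := by
  rw [colorDeg_eq_card] at h
  obtain ⟨a, ha⟩ := Finset.card_pos.mp h
  simp only [mem_filter, mem_univ, true_and] at ha
  exact ⟨a, ha⟩

lemma pure_all_edges {τ : Fin m} {v : Vt k}
    (hdeg : colorDeg (kkPlusUniversal k) c τ v = (kkPlusUniversal k).degree v) :
    ∀ w, (kkPlusUniversal k).Adj v w → c s(v, w) = τ := by
  intro w hw
  rw [colorDeg_eq_card] at hdeg
  rw [SimpleGraph.degree, SimpleGraph.neighborFinset_eq_filter] at hdeg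
  have hsub : (univ.filter (fun w => (kkPlusUniversal k).Adj v w ∧ c s(v, w) = τ))
      ⊆ (univ.filter (fun w => (kkPlusUniversal k).Adj v w)) := by
    intro x hx
    simp only [mem_filter, mem_univ, true_and] at hx ⊢
    exact hx.1
  have := Finset.eq_of_subset_of_card_le hsub (le_of_eq hdeg.symm)
  have hmem : w ∈ univ.filter (fun w => (kkPlusUniversal k).Adj v w) := by
    simp [hw]
  rw [← this] at hmem
  simp only [mem_filter, mem_univ, true_and] at hmem
  exact hmem.2

lemma exists_single (hk : 2 ≤ k) (hc : IsChiPrimeKColoring (kkPlusUniversal k) k c) :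
    ∃ t, colorDeg (kkPlusUniversal k) c t none = 1 := by
  by_contra hno
  push_neg at hno
  have hsum : ∑ t : Fin m, colorDeg (kkPlusUniversal k) c t none = 2 * k := by
    rw [sum_colorDeg, degree_none]
  rw [← Finset.sum_filter_add_sum_filter_not univ
    (fun t => colorDeg (kkPlusUniversal k) c t none = k + 1)] at hsum
  have h1 : ∑ t ∈ univ.filter (fun t => colorDeg (kkPlusUniversal k) c t none = k + 1),
      colorDeg (kkPlusUniversal k) c t none
      = (univ.filter (fun t => colorDeg (kkPlusUniversal k) c t none = k + 1)).card * (k + 1) := by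
    rw [Finset.sum_congr rfl (fun t ht => (Finset.mem_filter.mp ht).2), Finset.sum_const,
      smul_eq_mul]
  have h2 : ∑ t ∈ univ.filter (fun t => ¬colorDeg (kkPlusUniversal k) c t none = k + 1),
      colorDeg (kkPlusUniversal k) c t none = 0 := by
    apply Finset.sum_eq_zero
    intro t ht
    have := (Finset.mem_filter.mp ht).2
    rcases vals_none hk hc t with h | h | h
    · exact h
    · exact absurd h (hno t)
    · exact absurd h this
  rw [h1, h2] at hsum
  exact kp1_mul (a := (univ.filter (fun t =>
    colorDeg (kkPlusUniversal k) c t none = k + 1)).card) hk (by omega)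

lemma pure_or_rainbow (hk : 2 ≤ k) (hc : IsChiPrimeKColoring (kkPlusUniversal k) k c)
    (hm : m ≤ k + 1) {v : Vt k} (hv : v ≠ none) :
    (∃ t, colorDeg (kkPlusUniversal k) c t v = k + 1) ∨
      (∀ t, colorDeg (kkPlusUniversal k) c t v = 1) := by
  by_cases hp : ∃ t, colorDeg (kkPlusUniversal k) c t v = k + 1
  · exact Or.inl hp
  push_neg at hp
  right
  have hle1 : ∀ t, colorDeg (kkPlusUniversal k) c t v ≤ 1 := by
    intro t
    rcases vals_some hk hc hv t with h | h | h
    · omega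
    · omega
    · exact absurd h (hp t)
  have hsum : ∑ t : Fin m, colorDeg (kkPlusUniversal k) c t v = k + 1 := by
    rw [sum_colorDeg, degree_some hv]
  intro t0
  by_contra hne
  have ht0 : colorDeg (kkPlusUniversal k) c t0 v = 0 := by have := hle1 t0; omega
  have hsplit : ∑ t : Fin m, colorDeg (kkPlusUniversal k) c t v
      = colorDeg (kkPlusUniversal k) c t0 v
        + ∑ t ∈ univ.erase t0, colorDeg (kkPlusUniversal k) c t v :=
    (Finset.add_sum_erase univ _ (mem_univ t0)).symm
  have hbound : ∑ t ∈ univ.erase t0, colorDeg (kkPlusUniversal k) c t v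
      ≤ (univ.erase t0).card := by
    refine le_trans (Finset.sum_le_card_nsmul _ _ 1 (fun t _ => hle1 t)) ?_
    simp
  have hcard : (univ.erase t0).card = m - 1 := by
    rw [Finset.card_erase_of_mem (mem_univ t0), card_univ, Fintype.card_fin]
  omega

/-- The cascade argument: a color class that is "big" at the universal vertex and contains
a full star at some other vertex is incompatible with a rainbow vertex. -/
lemma cascade (hk : 2 ≤ k) (hc : IsChiPrimeKColoring (kkPlusUniversal k) k c) (τ : Fin m)
    (hu : colorDeg (kkPlusUniversal k) c τ none = k + 1)
    {w : Vt k} (hwne : w ≠ none) (hw : ∀ x, (kkPlusUniversal k).Adj w x → c s(w, x) = τ)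
    {v₀ : Vt k} (hv₀ne : v₀ ≠ none) (hv₀ : ∀ t, colorDeg (kkPlusUniversal k) c t v₀ = 1) :
    False := by
  set N := univ.filter (fun y => (kkPlusUniversal k).Adj none y ∧ c s(none, y) = τ) with hN
  have hNcard : N.card = k + 1 := by rw [← colorDeg_eq_card]; exact hu
  have hNne : ∀ y ∈ N, y ≠ none := by
    intro y hy
    rw [hN, mem_filter] at hy
    exact adj_none_iff.mp hy.2.1
  have hNcol : ∀ y ∈ N, c s(y, none) = τ := by
    intro y hy
    rw [hN, mem_filter] at hy
    rw [Sym2.eq_swap]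
    exact hy.2.2
  -- a center is a vertex all of whose edges have color τ
  have hctr_of_two : ∀ y, y ≠ none → 2 ≤ colorDeg (kkPlusUniversal k) c τ y →
      ∀ x, (kkPlusUniversal k).Adj y x → c s(y, x) = τ := by
    intro y hyne h2 x hx
    rcases vals_some hk hc hyne τ with h | h | h
    · omega
    · omega
    · exact pure_all_edges (by rw [h, degree_some hyne]) x hx
  -- there is a `τ`-neighbor of `none` on the other side of `w`
  have hother : ∃ y ∈ N, sideOf y ≠ sideOf w := by
    by_contra hno
    push_neg at hno
    have hsub : N ⊆ univ.filter (fun z : Vt k => z ≠ none ∧ sideOf z = sideOf w) := by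
      intro y hy
      simp only [mem_filter, mem_univ, true_and]
      exact ⟨hNne y hy, hno y hy⟩
    have := Finset.card_le_card hsub
    rw [hNcard, side_filter_card] at this
    omega
  obtain ⟨y0, hy0N, hy0s⟩ := hother
  have hy0ne := hNne y0 hy0N
  -- `y0` is a center
  have hy0ctr : ∀ x, (kkPlusUniversal k).Adj y0 x → c s(y0, x) = τ := by
    apply hctr_of_two y0 hy0ne
    refine two_edges τ (v := y0) (a := none) (b := w) (fun h => hwne h.symm) ?_ ?_ ?_ ?_
    · exact (kkPlusUniversal k).adj_symm (adj_none_iff.mpr hy0ne)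
    · exact (kkPlusUniversal k).adj_symm ((adj_some_iff hwne hy0ne).mpr (fun h => hy0s h.symm))
    · exact hNcol y0 hy0N
    · rw [Sym2.eq_swap]
      exact hw y0 ((adj_some_iff hwne hy0ne).mpr (fun h => hy0s h.symm))
  -- centers on both sides; pick the one opposite to any given vertex
  have hctrOpp : ∀ z : Vt k, z ≠ none → ∃ x, x ≠ none ∧ sideOf x ≠ sideOf z ∧
      (∀ u, (kkPlusUniversal k).Adj x u → c s(x, u) = τ) := by
    intro z hzne
    by_cases hs : sideOf z = sideOf w
    · exact ⟨y0, hy0ne, by rw [hs]; exact hy0s, hy0ctr⟩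
    · exact ⟨w, hwne, fun h => hs h.symm, hw⟩
  -- v₀ is not a τ-neighbor of none
  obtain ⟨x0, hx0ne, hx0s, hx0ctr⟩ := hctrOpp v₀ hv₀ne
  have hx0v₀ : (kkPlusUniversal k).Adj v₀ x0 :=
    (adj_some_iff hv₀ne hx0ne).mpr (fun h => hx0s h.symm)
  have hx0col : c s(v₀, x0) = τ := by
    rw [Sym2.eq_swap]
    exact hx0ctr v₀ ((kkPlusUniversal k).adj_symm hx0v₀)
  have hv₀N : v₀ ∉ N := by
    intro hmem
    have h2 : 2 ≤ colorDeg (kkPlusUniversal k) c τ v₀ := by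
      refine two_edges τ (v := v₀) (a := none) (b := x0) (fun h => hx0ne h.symm) ?_ hx0v₀ ?_ hx0col
      · exact (kkPlusUniversal k).adj_symm (adj_none_iff.mpr hv₀ne)
      · rw [Sym2.eq_swap]; exact (mem_filter.mp hmem).2.2
    rw [hv₀ τ] at h2
    omega
  -- every τ-neighbor of none is a center
  have hNctr : ∀ y ∈ N, ∀ x, (kkPlusUniversal k).Adj y x → c s(y, x) = τ := by
    intro y hy
    have hyne := hNne y hy
    obtain ⟨x, hxne, hxs, hxctr⟩ := hctrOpp y hyne
    apply hctr_of_two y hyne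
    refine two_edges τ (v := y) (a := none) (b := x) (fun h => hxne h.symm) ?_ ?_ ?_ ?_
    · exact (kkPlusUniversal k).adj_symm (adj_none_iff.mpr hyne)
    · exact (adj_some_iff hyne hxne).mpr (fun h => hxs h.symm)
    · exact hNcol y hy
    · rw [Sym2.eq_swap]
      exact hxctr y ((adj_some_iff hxne hyne).mpr hxs)
  -- counting
  have hsplit : (N.filter (fun z => sideOf z = sideOf v₀)).card
      + (N.filter (fun z => ¬ sideOf z = sideOf v₀)).card = N.card :=
    Finset.card_filter_add_card_filter_not (fun z => sideOf z = sideOf v₀)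
  have hsame : (N.filter (fun z => sideOf z = sideOf v₀)).card ≤ k - 1 := by
    have hsub : N.filter (fun z => sideOf z = sideOf v₀)
        ⊆ (univ.filter (fun z : Vt k => z ≠ none ∧ sideOf z = sideOf v₀)).erase v₀ := by
      intro z hz
      rw [mem_filter] at hz
      rw [Finset.mem_erase]
      refine ⟨fun h => hv₀N (h ▸ hz.1), ?_⟩
      simp only [mem_filter, mem_univ, true_and]
      exact ⟨hNne z hz.1, hz.2⟩
    have := Finset.card_le_card hsub
    rwa [Finset.card_erase_of_mem (by simp [hv₀ne]), side_filter_card] at this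
  have hopp : (N.filter (fun z => ¬ sideOf z = sideOf v₀)).card ≤ 1 := by
    rw [Finset.card_le_one]
    intro z1 hz1 z2 hz2
    rw [mem_filter] at hz1 hz2
    by_contra hne
    have hadj1 : (kkPlusUniversal k).Adj v₀ z1 :=
      (adj_some_iff hv₀ne (hNne z1 hz1.1)).mpr (fun h => hz1.2 h.symm)
    have hadj2 : (kkPlusUniversal k).Adj v₀ z2 :=
      (adj_some_iff hv₀ne (hNne z2 hz2.1)).mpr (fun h => hz2.2 h.symm)
    have hc1 : c s(v₀, z1) = τ := by
      rw [Sym2.eq_swap]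
      exact hNctr z1 hz1.1 v₀ ((kkPlusUniversal k).adj_symm hadj1)
    have hc2 : c s(v₀, z2) = τ := by
      rw [Sym2.eq_swap]
      exact hNctr z2 hz2.1 v₀ ((kkPlusUniversal k).adj_symm hadj2)
    have h2 := two_edges τ hne hadj1 hadj2 hc1 hc2
    rw [hv₀ τ] at h2
    omega
  omega

theorem lower_bound_aux (hk : 2 ≤ k) (c : Sym2 (Vt k) → Fin m)
    (hc : IsChiPrimeKColoring (kkPlusUniversal k) k c) : k + 2 ≤ m := by
  by_contra hm'
  have hm : m ≤ k + 1 := by omega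
  -- dichotomy
  have dich := fun (v : Vt k) (hv : v ≠ none) => pure_or_rainbow hk hc hm hv
  by_cases hrain : ∃ v : Vt k, v ≠ none ∧ ∀ t, colorDeg (kkPlusUniversal k) c t v = 1
  case neg =>
    -- every vertex is pure; all edges get a single color; contradiction at `none`
    push_neg at hrain
    have hpure : ∀ v : Vt k, v ≠ none →
        ∃ t, ∀ w, (kkPlusUniversal k).Adj v w → c s(v, w) = t := by
      intro v hv
      rcases dich v hv with ⟨t, ht⟩ | hr
      · exact ⟨t, pure_all_edges (by rw [ht, degree_some hv])⟩
      · obtain ⟨t', ht'⟩ := hrain v hv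
        exact absurd (hr t') ht'
    have i0 : Fin k := ⟨0, by omega⟩
    obtain ⟨τ, hτ⟩ := hpure (vL i0) (by simp [vL])
    have hRall : ∀ j : Fin k, ∀ w, (kkPlusUniversal k).Adj (vR j) w → c s(vR j, w) = τ := by
      intro j
      obtain ⟨σ, hσ⟩ := hpure (vR j) (by simp [vR])
      have : σ = τ := by
        have h1 := hσ (vL i0) ((kkPlusUniversal k).adj_symm (adj_LR i0 j))
        have h2 := hτ (vR j) (adj_LR i0 j)
        rw [Sym2.eq_swap] at h1
        rw [← h1, h2]
      rw [← this]
      exact hσ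
    have hLall : ∀ i : Fin k, ∀ w, (kkPlusUniversal k).Adj (vL i) w → c s(vL i, w) = τ := by
      intro i
      obtain ⟨σ, hσ⟩ := hpure (vL i) (by simp [vL])
      have : σ = τ := by
        have h1 := hσ (vR i0) (adj_LR i i0)
        have h2 := hRall i0 (vL i) ((kkPlusUniversal k).adj_symm (adj_LR i i0))
        rw [Sym2.eq_swap] at h2
        rw [← h1, h2]
      rw [← this]
      exact hσ
    have hall : ∀ w : Vt k, w ≠ none → c s(none, w) = τ := by
      intro w hw
      rw [Sym2.eq_swap]
      match w with
      | some (Sum.inl i) => exact hLall i none (adj_L_iff.mpr (Or.inl rfl))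
      | some (Sum.inr j) => exact hRall j none (adj_R_iff.mpr (Or.inl rfl))
    have hdeg : colorDeg (kkPlusUniversal k) c τ none = 2 * k := by
      rw [colorDeg_eq_card]
      have : (univ.filter (fun w => (kkPlusUniversal k).Adj none w ∧ c s(none, w) = τ))
          = univ.filter (fun w => (kkPlusUniversal k).Adj none w) := by
        ext w
        simp only [mem_filter, mem_univ, true_and]
        exact ⟨fun h => h.1, fun h => ⟨h, hall w (adj_none_iff.mp h)⟩⟩
      rw [this]
      rw [← SimpleGraph.neighborFinset_eq_filter, ← SimpleGraph.degree, degree_none]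
    rcases vals_none hk hc τ with h | h | h <;> omega
  case pos =>
    obtain ⟨v₀, hv₀ne, hv₀⟩ := hrain
    -- all vertices are rainbow
    have hall : ∀ v : Vt k, v ≠ none → ∀ t, colorDeg (kkPlusUniversal k) c t v = 1 := by
      intro v hvne
      rcases dich v hvne with ⟨τ, hτ⟩ | hr
      swap
      · exact hr
      exfalso
      -- v is pure with color τ
      have hvall : ∀ w, (kkPlusUniversal k).Adj v w → c s(v, w) = τ :=
        pure_all_edges (by rw [hτ, degree_some hvne])
      have hune : colorDeg (kkPlusUniversal k) c τ none ≥ 1 := by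
        refine one_edge τ (adj_none_iff.mpr hvne) ?_
        rw [Sym2.eq_swap]
        exact hvall none ((kkPlusUniversal k).adj_symm (adj_none_iff.mpr hvne))
      rcases vals_none hk hc τ with h | h | h
      · omega
      swap
      · -- big at none: cascade
        exact cascade hk hc τ h hvne hvall hv₀ne hv₀
      -- single at none
      -- every vertex on the same side as v is pure
      have hsamepure : ∀ z : Vt k, z ≠ none → sideOf z = sideOf v →
          ∃ σ, colorDeg (kkPlusUniversal k) c σ z = k + 1 := by
        intro z hzne hzs
        rcases dich z hzne with hp | hr
        · exact hp
        exfalso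
        -- z rainbow : find its τ-edge
        obtain ⟨x, hxadj, hxcol⟩ := get_edge τ (by rw [hr τ])
        have hzv : z ≠ v := by
          intro he
          have := hr τ
          rw [he, hτ] at this
          omega
        by_cases hxn : x = none
        · subst hxn
          have h2 : 2 ≤ colorDeg (kkPlusUniversal k) c τ none := by
            refine two_edges τ (v := (none : Vt k)) (a := z) (b := v) hzv
              (adj_none_iff.mpr hzne) (adj_none_iff.mpr hvne) ?_ ?_
            · rw [Sym2.eq_swap]; exact hxcol
            · rw [Sym2.eq_swap]
              exact hvall none ((kkPlusUniversal k).adj_symm (adj_none_iff.mpr hvne))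
          omega
        · -- x is on the opposite side of v ; it gets two τ-edges, becomes a center
          have hxs : sideOf x ≠ sideOf v := by
            rw [← hzs]
            exact fun h => ((adj_some_iff hzne hxn).mp hxadj) h.symm
          have hxv : (kkPlusUniversal k).Adj x v := (adj_some_iff hxn hvne).mpr hxs
          have h2 : 2 ≤ colorDeg (kkPlusUniversal k) c τ x := by
            refine two_edges τ (v := x) (a := z) (b := v) hzv
              ((kkPlusUniversal k).adj_symm hxadj) hxv ?_ ?_
            · rw [Sym2.eq_swap]; exact hxcol
            · rw [Sym2.eq_swap]; exact hvall x ((kkPlusUniversal k).adj_symm hxv)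
          have hxctr : ∀ u, (kkPlusUniversal k).Adj x u → c s(x, u) = τ := by
            rcases vals_some hk hc hxn τ with h' | h' | h'
            · omega
            · omega
            · exact pure_all_edges (by rw [h', degree_some hxn])
          have hxnone : c s(none, x) = τ := by
            rw [Sym2.eq_swap]
            exact hxctr none ((kkPlusUniversal k).adj_symm (adj_none_iff.mpr hxn))
          have hxvne : x ≠ v := fun he => hxs (he ▸ rfl)
          have h2' : 2 ≤ colorDeg (kkPlusUniversal k) c τ none := by
            refine two_edges τ (v := (none : Vt k)) (a := x) (b := v) hxvne
              (adj_none_iff.mpr hxn) (adj_none_iff.mpr hvne) hxnone ?_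
            rw [Sym2.eq_swap]
            exact hvall none ((kkPlusUniversal k).adj_symm (adj_none_iff.mpr hvne))
          omega
      -- each same-side vertex is a center of its own pure color, single at none, all distinct
      have hchoice : ∀ z : Vt k, z ≠ none → sideOf z = sideOf v →
          ∃ σ, colorDeg (kkPlusUniversal k) c σ none = 1 ∧ c s(none, z) = σ := by
        intro z hzne hzs
        obtain ⟨σ, hσ⟩ := hsamepure z hzne hzs
        have hzall : ∀ w, (kkPlusUniversal k).Adj z w → c s(z, w) = σ :=
          pure_all_edges (by rw [hσ, degree_some hzne])
        have hzcol : c s(none, z) = σ := by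
          rw [Sym2.eq_swap]
          exact hzall none ((kkPlusUniversal k).adj_symm (adj_none_iff.mpr hzne))
        have h1 : 1 ≤ colorDeg (kkPlusUniversal k) c σ none :=
          one_edge σ (adj_none_iff.mpr hzne) hzcol
        rcases vals_none hk hc σ with h' | h' | h'
        · omega
        · exact ⟨σ, h', hzcol⟩
        · exact absurd (cascade hk hc σ h' hzne hzall hv₀ne hv₀) id
      -- build the injective map from the side of `v` to the single colors at `none`
      have hinj : (univ.filter (fun z : Vt k => z ≠ none ∧ sideOf z = sideOf v)).card
          ≤ (univ.filter (fun t : Fin m =>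
              colorDeg (kkPlusUniversal k) c t none = 1)).card := by
        apply Finset.card_le_card_of_injOn
          (fun z => c s(none, z))
        · intro z hz
          simp only [Finset.mem_coe, mem_filter, mem_univ, true_and] at hz ⊢
          obtain ⟨σ, hσ1, hσ2⟩ := hchoice z hz.1 hz.2
          rw [hσ2]
          exact hσ1
        · intro z1 hz1 z2 hz2 he
          simp only [coe_filter, Set.mem_setOf_eq, mem_univ, true_and] at hz1 hz2
          by_contra hne
          obtain ⟨σ, hσ1, hσ2⟩ := hchoice z1 hz1.1 hz1.2
          have h2 : 2 ≤ colorDeg (kkPlusUniversal k) c σ none :=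
            two_edges σ hne (adj_none_iff.mpr hz1.1) (adj_none_iff.mpr hz2.1)
              hσ2 (by
                have he' : c s(none, z1) = c s(none, z2) := he
                rw [← he', hσ2])
          omega
      rw [side_filter_card] at hinj
      -- sum of color degrees at `none`
      set c1 := (univ.filter (fun t : Fin m =>
        colorDeg (kkPlusUniversal k) c t none = 1)).card with hc1
      set ca := (univ.filter (fun t : Fin m =>
        colorDeg (kkPlusUniversal k) c t none = k + 1)).card with hca
      have hsum : ∑ t : Fin m, colorDeg (kkPlusUniversal k) c t none = 2 * k := by
        rw [sum_colorDeg, degree_none]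
      rw [← Finset.sum_filter_add_sum_filter_not univ
        (fun t => colorDeg (kkPlusUniversal k) c t none = 1)] at hsum
      have h1 : ∑ t ∈ univ.filter (fun t => colorDeg (kkPlusUniversal k) c t none = 1),
          colorDeg (kkPlusUniversal k) c t none = c1 := by
        rw [Finset.sum_congr rfl (fun t ht => (Finset.mem_filter.mp ht).2), Finset.sum_const,
          smul_eq_mul, mul_one]
      have h2 : ∑ t ∈ univ.filter (fun t => ¬colorDeg (kkPlusUniversal k) c t none = 1),
          colorDeg (kkPlusUniversal k) c t none = ca * (k + 1) := by
        have hre : univ.filter (fun t => ¬colorDeg (kkPlusUniversal k) c t none = 1)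
            = (univ.filter (fun t => ¬colorDeg (kkPlusUniversal k) c t none = 1)).filter
                (fun t => colorDeg (kkPlusUniversal k) c t none = k + 1)
              ∪ (univ.filter (fun t => ¬colorDeg (kkPlusUniversal k) c t none = 1)).filter
                (fun t => ¬colorDeg (kkPlusUniversal k) c t none = k + 1) := by
          rw [Finset.filter_union_filter_not_eq]
        rw [hre, Finset.sum_union (Finset.disjoint_filter_filter_not _ _ _)]
        have ha : ∑ t ∈ (univ.filter (fun t => ¬colorDeg (kkPlusUniversal k) c t none = 1)).filter
            (fun t => colorDeg (kkPlusUniversal k) c t none = k + 1),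
            colorDeg (kkPlusUniversal k) c t none
            = ((univ.filter (fun t => ¬colorDeg (kkPlusUniversal k) c t none = 1)).filter
              (fun t => colorDeg (kkPlusUniversal k) c t none = k + 1)).card * (k + 1) := by
          rw [Finset.sum_congr rfl (fun t ht => (Finset.mem_filter.mp ht).2), Finset.sum_const,
            smul_eq_mul]
        have hb : ∑ t ∈ (univ.filter (fun t => ¬colorDeg (kkPlusUniversal k) c t none = 1)).filter
            (fun t => ¬colorDeg (kkPlusUniversal k) c t none = k + 1),
            colorDeg (kkPlusUniversal k) c t none = 0 := by
          apply Finset.sum_eq_zero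
          intro t ht
          simp only [mem_filter, mem_univ, true_and] at ht
          rcases vals_none hk hc t with h' | h' | h'
          · exact h'
          · exact absurd h' ht.1
          · exact absurd h' ht.2
        have hcc : ((univ.filter (fun t => ¬colorDeg (kkPlusUniversal k) c t none = 1)).filter
            (fun t => colorDeg (kkPlusUniversal k) c t none = k + 1)).card = ca := by
          rw [hca]
          congr 1
          ext t
          simp only [mem_filter, mem_univ, true_and]
          constructor
          · exact fun h => h.2
          · intro h
            exact ⟨by rw [h]; omega, h⟩
        rw [ha, hb, hcc]
        omega
      rw [h1, h2] at hsum
      -- counting contradiction : c1 ≥ k, c1 + ca ≤ m ≤ k+1, c1 + ca(k+1) = 2k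
      have hcab : c1 + ca ≤ m := by
        have : (univ.filter (fun t : Fin m => colorDeg (kkPlusUniversal k) c t none = 1)) ∪
            (univ.filter (fun t : Fin m => colorDeg (kkPlusUniversal k) c t none = k + 1))
              ⊆ univ := Finset.subset_univ _
        have hdisj : Disjoint
            (univ.filter (fun t : Fin m => colorDeg (kkPlusUniversal k) c t none = 1))
            (univ.filter (fun t : Fin m => colorDeg (kkPlusUniversal k) c t none = k + 1)) := by
          rw [Finset.disjoint_filter]
          intro t _ h1'
          rw [h1']
          omega
        calc c1 + ca = ((univ.filter (fun t : Fin m =>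
              colorDeg (kkPlusUniversal k) c t none = 1)) ∪
            (univ.filter (fun t : Fin m =>
              colorDeg (kkPlusUniversal k) c t none = k + 1))).card := by
              rw [Finset.card_union_of_disjoint hdisj]
        _ ≤ univ.card := Finset.card_le_card this
        _ = m := by rw [card_univ, Fintype.card_fin]
      rcases Nat.lt_or_ge ca 2 with hca2 | hca2
      · interval_cases ca <;> omega
      · have := Nat.mul_le_mul_right (k + 1) hca2
        omega
    -- final parity contradiction
    obtain ⟨t₁, ht₁⟩ := exists_single hk hc
    have heven := colorDeg_even (kkPlusUniversal k) c t₁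
    rw [Fintype.sum_option] at heven
    have hsome : ∑ a : Fin k ⊕ Fin k, colorDeg (kkPlusUniversal k) c t₁ (some a)
        = 2 * k := by
      rw [Finset.sum_congr rfl (fun a _ => hall (some a) (by simp) t₁), Finset.sum_const,
        smul_eq_mul, mul_one, card_univ, Fintype.card_sum, Fintype.card_fin]
      omega
    rw [ht₁, hsome] at heven
    obtain ⟨p, hp⟩ := heven
    omega

end Lower

theorem lower_bound (hk : 2 ≤ k) (m : ℕ) (c : Sym2 (Vt k) → Fin m)
    (hc : IsChiPrimeKColoring (kkPlusUniversal k) k c) : k + 2 ≤ m :=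
  lower_bound_aux hk c hc

end KKU

theorem chi_prime_k_kk_plus_universal (k : ℕ) (hk : 2 ≤ k) :
    (∃ c : Sym2 (Option (Fin k ⊕ Fin k)) → Fin (k + 2),
      IsChiPrimeKColoring (kkPlusUniversal k) k c) ∧
    (∀ m : ℕ, (∃ c : Sym2 (Option (Fin k ⊕ Fin k)) → Fin m,
      IsChiPrimeKColoring (kkPlusUniversal k) k c) → k + 2 ≤ m) := by
  haveI : NeZero k := ⟨by omega⟩
  constructor
  · exact ⟨KKU.theColoring (goodMap k hk), KKU.upper_bound hk (goodMap k hk)⟩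
  · rintro m ⟨c, hc⟩
    exact KKU.lower_bound hk m c hc
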